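/- Fix q ∈ [0,1) with 2(1−q)⁴ > 1. For n ≥ 2 define p*(n) := max{ log(⌈n(1−q)³ − √(n·log n)⌉) / ⌈n(1−q)³ − √(n·log n)⌉ , (3·√((n−1)·log(n−1)) − 1) / ((n−1)·(2(1−q)⁴ − 1)) } and t_n := ⌈((n−1)·p*(n) + √((n−1)·log(n−1)) + 1)/2⌉. Then there exist a constant c > 0 and a natural number N such that for all n ≥ N, n · exp( −(n−1) · D((t_n−1)/(n−1) ‖ p*(n)·(1−q)⁴) ) ≤ n · exp( −c·√(n·log n) ), where for a, b ∈ (0,1), D(a‖b) := a·log(a/b) + (1−a)·log((1−a)/(1−b)). -/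

import Mathlib

/-- Kullback–Leibler divergence between `Bernoulli a` and `Bernoulli b`. -/
noncomputable def klBer (a b : ℝ) : ℝ :=
  a * Real.log (a / b) + (1 - a) * Real.log ((1 - a) / (1 - b))

/-- The threshold connection probability `p*(n)` of equation (5) of the paper. -/
noncomputable def pstar (q : ℝ) (n : ℕ) : ℝ :=
  max
    (Real.log (⌈(n:ℝ) * (1-q)^3 - Real.sqrt ((n:ℝ) * Real.log n)⌉₊ : ℝ)
      / (⌈(n:ℝ) * (1-q)^3 - Real.sqrt ((n:ℝ) * Real.log n)⌉₊ : ℝ))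
    ((3 * Real.sqrt (((n:ℝ)-1) * Real.log ((n:ℝ)-1)) - 1)
      / (((n:ℝ)-1) * (2*(1-q)^4 - 1)))

/-- The paper's design rule for the secret-sharing threshold `t`. -/
noncomputable def tThreshold (q : ℝ) (n : ℕ) : ℕ :=
  ⌈(((n:ℝ)-1) * pstar q n + Real.sqrt (((n:ℝ)-1) * Real.log ((n:ℝ)-1)) + 1) / 2⌉₊

lemma aux_two_log_le {y : ℝ} (hy : 1 ≤ y) : 2 * Real.log y ≤ y - 1/y := by
  have hy0 : (0:ℝ) < 1 := one_pos
  set f : ℝ → ℝ := fun t => t - 1/t - 2*Real.log t with hf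
  have hd : ∀ t : ℝ, 0 < t → HasDerivAt f ((1 - 1/t)^2) t := by
    intro t ht
    have h1 : HasDerivAt (fun t : ℝ => t) 1 t := hasDerivAt_id t
    have h2 : HasDerivAt (fun t : ℝ => 1/t) (-(t^2)⁻¹) t := by
      simpa [one_div] using hasDerivAt_inv ht.ne'
    have h3 : HasDerivAt (fun t : ℝ => 2*Real.log t) (2 * t⁻¹) t :=
      (Real.hasDerivAt_log ht.ne').const_mul 2
    have := (h1.sub h2).sub h3
    refine this.congr_deriv ?_
    ring
  have hmono : StrictMonoOn f (Set.Ici (1:ℝ)) := by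
    apply strictMonoOn_of_deriv_pos (convex_Ici 1)
    · intro t ht
      exact ((hd t (lt_of_lt_of_le one_pos ht)).continuousAt).continuousWithinAt
    · intro t ht
      rw [interior_Ici] at ht
      have ht1 : (1:ℝ) < t := ht
      have ht0 : (0:ℝ) < t := lt_trans one_pos ht1
      rw [(hd t ht0).deriv]
      have h1t : 1/t < 1 := by rw [div_lt_one ht0]; exact ht1
      exact pow_pos (by rw [sub_pos, div_lt_one ht0]; exact ht1) 2
  have hf1 : f 1 = 0 := by simp [hf]
  rcases eq_or_lt_of_le hy with h | h
  · subst h; simp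
  · have := hmono (Set.self_mem_Ici) (le_of_lt h) h
    rw [hf1] at this
    have : 0 ≤ f y := le_of_lt this
    simp only [hf] at this
    linarith

lemma klBer_lb {a b : ℝ} (ha : 0 < a) (hab : a < b) (hb1 : b < 1) :
    (b - a)^2 / (2*b) ≤ klBer a b := by
  have hb0 : 0 < b := ha.trans hab
  have ha1 : a < 1 := hab.trans hb1
  set u := Real.sqrt a with hu
  set v := Real.sqrt b with hv
  have hu0 : 0 < u := Real.sqrt_pos.mpr ha
  have hv0 : 0 < v := Real.sqrt_pos.mpr hb0
  have huv : u < v := Real.sqrt_lt_sqrt ha.le hab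
  have hu2 : u^2 = a := Real.sq_sqrt ha.le
  have hv2 : v^2 = b := Real.sq_sqrt hb0.le
  have h2 : b - a ≤ (1 - a) * Real.log ((1 - a)/(1 - b)) := by
    have h1a : (0:ℝ) < 1 - a := by linarith
    have h1b : (0:ℝ) < 1 - b := by linarith
    have hpos : (0:ℝ) < (1 - b)/(1 - a) := div_pos h1b h1a
    have hlog := Real.log_le_sub_one_of_pos hpos
    have hrw : Real.log ((1-a)/(1-b)) = - Real.log ((1-b)/(1-a)) := by
      rw [← Real.log_inv, inv_div]
    rw [hrw]
    have hprod := mul_le_mul_of_nonneg_left hlog h1a.le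
    have key : (1-a) * ((1-b)/(1-a) - 1) = a - b := by field_simp; ring
    nlinarith [hprod]
  have h1 : -((b - a) * (u/v)) ≤ a * Real.log (a/b) := by
    have hlba : Real.log (b/a) = 2 * Real.log (v/u) := by
      rw [Real.log_div hb0.ne' ha.ne', Real.log_div hv0.ne' hu0.ne', ← hu2, ← hv2,
        Real.log_pow, Real.log_pow]
      push_cast; ring
    have hy1 : (1:ℝ) ≤ v/u := (one_le_div hu0).mpr huv.le
    have haux := aux_two_log_le hy1
    have hinv : 1/(v/u) = u/v := by rw [one_div_div]
    rw [hinv] at haux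
    have hrw : Real.log (a/b) = - Real.log (b/a) := by rw [← Real.log_inv, inv_div]
    rw [hrw, hlba]
    have hid : a * (v/u - u/v) = (b - a) * (u/v) := by
      rw [← hu2, ← hv2]; field_simp
    nlinarith [mul_le_mul_of_nonneg_left haux ha.le]
  have hkl : (b - a) * (1 - u/v) ≤ klBer a b := by
    unfold klBer
    nlinarith [h1, h2, mul_pos (sub_pos.mpr hab) (div_pos hu0 hv0)]
  refine le_trans ?_ hkl
  rw [div_le_iff₀ (by positivity)]
  rw [← hu2, ← hv2]
  have hvne : v ≠ 0 := hv0.ne'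
  field_simp
  nlinarith [sq_nonneg (v - u), sq_nonneg (v + u), mul_pos hu0 hv0, huv, hu0, hv0]

lemma log_le_two_sqrt {x : ℝ} (hx : 1 ≤ x) : Real.log x ≤ 2 * Real.sqrt x := by
  have hx0 : (0:ℝ) < x := lt_of_lt_of_le one_pos hx
  have hs0 : (0:ℝ) < Real.sqrt x := Real.sqrt_pos.mpr hx0
  have h1 : Real.log (Real.sqrt x) = Real.log x / 2 := Real.log_sqrt hx0.le
  have h2 := Real.log_le_sub_one_of_pos hs0
  linarith

set_option maxHeartbeats 2000000 in
/-- (Appendix D of the paper.) With `p = p*(n)` and `t = t_n` chosen by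
the paper's design rule, the reliability failure bound
`n·exp(−(n−1)·D((t_n−1)/(n−1) ‖ p*(n)(1−q)⁴))` is at most `n·exp(−c√(n log n))`
for some constant `c > 0` and all large `n`. -/
theorem reliability_bound_at_pstar (q : ℝ) (hq : q ∈ Set.Ico (0:ℝ) 1)
    (hq2 : 1 < 2*(1-q)^4) :
    ∃ c : ℝ, 0 < c ∧ ∃ N : ℕ, ∀ n : ℕ, N ≤ n →
      (n:ℝ) * Real.exp (-(((n:ℝ)-1) *
          klBer (((tThreshold q n : ℝ) - 1) / ((n:ℝ)-1)) (pstar q n * (1-q)^4)))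
        ≤ (n:ℝ) * Real.exp (-(c * Real.sqrt ((n:ℝ) * Real.log n))) := by
  obtain ⟨hq0, hq1⟩ := hq
  set s : ℝ := 1 - q with hs_def
  have hs0 : 0 < s := by rw [hs_def]; linarith
  have hs1 : s ≤ 1 := by rw [hs_def]; linarith
  set K : ℝ := 2*s^4 - 1 with hK_def
  have hK : 0 < K := by rw [hK_def]; linarith
  set C : ℝ := max (Real.sqrt (8/s^3)) (3/K) with hC_def
  have hC0 : 0 < C := lt_of_lt_of_le (by positivity) (le_max_right _ _)
  have hC1 : Real.sqrt (8/s^3) ≤ C := le_max_left _ _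
  have hC2 : 3/K ≤ C := le_max_right _ _
  clear_value s K C
  refine ⟨1/(16*C), by positivity, ?_⟩
  obtain ⟨N, hN⟩ := exists_nat_ge (max (max 18 (64/s^12)) (64*C^4 + 2))
  refine ⟨N, fun n hn => ?_⟩
  have hxN : (N:ℝ) ≤ (n:ℝ) := Nat.cast_le.mpr hn
  -- unfold the definitions once
  have hP_eq : pstar q n = max
      (Real.log (⌈(n:ℝ) * s^3 - Real.sqrt ((n:ℝ) * Real.log n)⌉₊ : ℝ)
        / (⌈(n:ℝ) * s^3 - Real.sqrt ((n:ℝ) * Real.log n)⌉₊ : ℝ))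
      ((3 * Real.sqrt (((n:ℝ)-1) * Real.log ((n:ℝ)-1)) - 1)
        / (((n:ℝ)-1) * K)) := by rw [pstar, hK_def, hs_def]
  have ht_eq : tThreshold q n =
      ⌈(((n:ℝ)-1) * pstar q n + Real.sqrt (((n:ℝ)-1) * Real.log ((n:ℝ)-1)) + 1) / 2⌉₊ :=
    rfl
  set x : ℝ := (n:ℝ) with hx_def
  set m : ℝ := x - 1 with hm_def
  have hM_ceil : x * s^3 - Real.sqrt (x * Real.log x)
      ≤ ((⌈x * s^3 - Real.sqrt (x * Real.log x)⌉₊ : ℕ) : ℝ) := Nat.le_ceil _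
  set M : ℕ := ⌈x * s^3 - Real.sqrt (x * Real.log x)⌉₊ with hM_def
  set S : ℝ := Real.sqrt (m * Real.log m) with hS_def
  set T : ℝ := Real.sqrt (Real.log m / m) with hT_def
  set P : ℝ := pstar q n with hP_def
  have ht_lb : (m * P + S + 1) / 2 ≤ ((tThreshold q n : ℕ) : ℝ) := by
    rw [ht_eq]; exact Nat.le_ceil _
  have ht_ub' : ∀ _ : (0:ℝ) ≤ (m * P + S + 1) / 2,
      ((tThreshold q n : ℕ) : ℝ) < (m * P + S + 1) / 2 + 1 := by
    intro h; rw [ht_eq]; exact Nat.ceil_lt_add_one h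
  set t : ℕ := tThreshold q n with ht_def
  clear_value x m M S T P t
  clear ht_def hM_def ht_eq
  -- basic bounds
  have hx18 : (18:ℝ) ≤ x :=
    le_trans (le_trans (le_max_left _ _) (le_trans (le_max_left _ _) hN)) hxN
  have hx64 : 64/s^12 ≤ x :=
    le_trans (le_trans (le_max_right _ _) (le_trans (le_max_left _ _) hN)) hxN
  have hxC : 64*C^4 + 2 ≤ x := le_trans (le_trans (le_max_right _ _) hN) hxN
  have hm0 : (0:ℝ) < m := by rw [hm_def]; linarith
  have hm17 : (17:ℝ) ≤ m := by rw [hm_def]; linarith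
  have hmC : 64*C^4 ≤ m := by rw [hm_def]; linarith
  have hmx : m ≤ x := by rw [hm_def]; linarith
  have hlogm1 : (1:ℝ) ≤ Real.log m := by
    rw [Real.le_log_iff_exp_le hm0]
    have := Real.exp_one_lt_d9
    linarith
  have hlogx0 : (0:ℝ) ≤ Real.log x := Real.log_nonneg (by linarith)
  have hT0 : 0 < T := by rw [hT_def]; exact Real.sqrt_pos.mpr (by positivity)
  have hS_eq : S = m * T := by
    rw [hS_def, hT_def, show m * Real.log m = m^2 * (Real.log m / m) by field_simp,
      Real.sqrt_mul (sq_nonneg m), Real.sqrt_sq hm0.le]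
  have hS4 : (4:ℝ) ≤ S := by
    rw [hS_def, show (4:ℝ) = Real.sqrt 16 by
      rw [show (16:ℝ) = 4^2 by norm_num, Real.sqrt_sq (by norm_num)]]
    apply Real.sqrt_le_sqrt
    nlinarith
  have hS0 : (0:ℝ) < S := by linarith
  -- sqrt(x log x) ≤ x s^3 / 2
  have hsqx : Real.sqrt x * Real.sqrt x = x := Real.mul_self_sqrt (by linarith)
  have hsx8 : 8/s^6 ≤ Real.sqrt x := by
    rw [show (64:ℝ)/s^12 = (8/s^6)^2 by field_simp; ring] at hx64
    calc 8/s^6 = Real.sqrt ((8/s^6)^2) := (Real.sqrt_sq (by positivity)).symm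
    _ ≤ Real.sqrt x := Real.sqrt_le_sqrt hx64
  have hlogx_le : Real.log x ≤ x * s^6 / 4 := by
    have h1 := log_le_two_sqrt (show (1:ℝ) ≤ x by linarith)
    have h2 : 2 * Real.sqrt x ≤ x * s^6 / 4 := by
      calc 2 * Real.sqrt x = (Real.sqrt x * s^6/4) * (8/s^6) := by field_simp; ring
      _ ≤ (Real.sqrt x * s^6/4) * Real.sqrt x := by
          apply mul_le_mul_of_nonneg_left hsx8 (by positivity)
      _ = x * s^6 / 4 := by linear_combination (s^6/4) * hsqx
    linarith
  have hsqrt_xlogx : Real.sqrt (x * Real.log x) ≤ x * s^3 / 2 := by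
    calc Real.sqrt (x * Real.log x) ≤ Real.sqrt ((x * s^3/2)^2) := by
          apply Real.sqrt_le_sqrt
          have h1 := mul_le_mul_of_nonneg_left hlogx_le (show (0:ℝ) ≤ x by linarith)
          have h2 : x*(x*s^6/4) = (x*s^3/2)^2 := by ring
          linarith
    _ = x * s^3/2 := Real.sqrt_sq (by positivity)
  -- M bounds
  have hM_lb : x * s^3 / 2 ≤ (M:ℝ) := by linarith
  have hM32 : (32:ℝ) ≤ (M:ℝ) := by
    have hs9 : s^9 ≤ 1 := pow_le_one₀ hs0.le hs1
    have : (64:ℝ) ≤ x * s^3 := by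
      rw [div_le_iff₀ (by positivity)] at hx64
      have h1 : s^12 ≤ s^3 := pow_le_pow_of_le_one hs0.le hs1 (by norm_num)
      have h2 := mul_le_mul_of_nonneg_left h1 (show (0:ℝ) ≤ x by linarith)
      linarith [hx64, h2]
    linarith
  have hM0 : (0:ℝ) < (M:ℝ) := by linarith
  have hsqM : Real.sqrt M * Real.sqrt M = (M:ℝ) := Real.mul_self_sqrt hM0.le
  have hsqM0 : 0 < Real.sqrt M := Real.sqrt_pos.mpr hM0
  -- L1 ≤ C * T
  have hL1 : Real.log M / M ≤ C * T := by
    have h1 : Real.log M ≤ 2 * Real.sqrt M := log_le_two_sqrt (by linarith)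
    have h2 : Real.log M / M ≤ 2 / Real.sqrt M := by
      rw [div_le_div_iff₀ hM0 hsqM0]
      calc Real.log M * Real.sqrt M ≤ (2 * Real.sqrt M) * Real.sqrt M :=
            mul_le_mul_of_nonneg_right h1 hsqM0.le
      _ = 2 * (M:ℝ) := by rw [mul_assoc, hsqM]
    have h3 : 2 / Real.sqrt M ≤ Real.sqrt (8/s^3) * T := by
      rw [div_le_iff₀ hsqM0, hT_def, ← Real.sqrt_mul (by positivity),
        ← Real.sqrt_mul (by positivity)]
      rw [show (2:ℝ) = Real.sqrt 4 by
        rw [show (4:ℝ) = 2^2 by norm_num, Real.sqrt_sq (by norm_num)]]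
      apply Real.sqrt_le_sqrt
      have hmsM : m * s^3 / 2 ≤ (M:ℝ) := by
        have h4 := mul_le_mul_of_nonneg_right hmx (show (0:ℝ) ≤ s^3/2 by positivity)
        linarith [hM_lb]
      have key : 4 * (s^3 * m) ≤ 8 * Real.log m * M := by
        have h5 := mul_le_mul hlogm1 hmsM (by positivity) (by linarith)
        linarith [h5]
      have e : 8/s^3 * (Real.log m / m) * (M:ℝ) = 8 * Real.log m * M / (s^3 * m) := by
        field_simp
      rw [e, le_div_iff₀ (by positivity)]
      linarith [key]
    calc Real.log M / M ≤ 2 / Real.sqrt M := h2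
    _ ≤ Real.sqrt (8/s^3) * T := h3
    _ ≤ C * T := mul_le_mul_of_nonneg_right hC1 hT0.le
  -- L2 ≤ C * T
  have hL2 : (3 * S - 1) / (m * K) ≤ C * T := by
    have h1 : (3 * S - 1) / (m * K) ≤ 3 * S / (m * K) := by
      exact div_le_div_of_nonneg_right (by linarith) (by positivity)
    have h2 : 3 * S / (m * K) = (3/K) * T := by
      rw [hS_eq]; field_simp
    rw [h2] at h1
    calc (3 * S - 1) / (m * K) ≤ (3/K) * T := h1
    _ ≤ C * T := mul_le_mul_of_nonneg_right hC2 hT0.le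
  -- P bounds
  have hP_lb : (3 * S - 1) / (m * K) ≤ P := by
    rw [hP_eq]; exact le_max_right _ _
  have hP_ub : P ≤ C * T := by
    rw [hP_eq]; exact max_le hL1 hL2
  have hP0 : 0 ≤ P := le_trans (div_nonneg (by linarith) (mul_pos hm0 hK).le) hP_lb
  -- T ≤ 1/(2C)
  have hsqm : Real.sqrt m * Real.sqrt m = m := Real.mul_self_sqrt hm0.le
  have h8C : 8*C^2 ≤ Real.sqrt m := by
    calc (8:ℝ)*C^2 = Real.sqrt ((8*C^2)^2) := (Real.sqrt_sq (by positivity)).symm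
    _ ≤ Real.sqrt m := Real.sqrt_le_sqrt (by linarith [hmC])
  have hT_ub : T ≤ 1/(2*C) := by
    have hlm : Real.log m ≤ 2 * Real.sqrt m := log_le_two_sqrt (by linarith)
    have h1 : Real.log m / m ≤ 1/(4*C^2) := by
      rw [div_le_div_iff₀ hm0 (by positivity)]
      have u1 := mul_le_mul_of_nonneg_right hlm (show (0:ℝ) ≤ 4*C^2 by positivity)
      have u2 := mul_le_mul_of_nonneg_left h8C (Real.sqrt_nonneg m)
      linarith [u1, u2, hsqm]
    calc T = Real.sqrt (Real.log m / m) := hT_def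
    _ ≤ Real.sqrt (1/(4*C^2)) := Real.sqrt_le_sqrt h1
    _ = 1/(2*C) := by
        rw [show (1:ℝ)/(4*C^2) = (1/(2*C))^2 by field_simp; ring, Real.sqrt_sq (by positivity)]
  -- b = P * s^4 bounds
  have hs4 : s^4 ≤ 1 := pow_le_one₀ hs0.le hs1
  have hb_ub : P * s^4 ≤ C * T := by
    have h1 := mul_le_mul_of_nonneg_left hs4 hP0
    linarith [hP_ub, h1]
  have hb_half : P * s^4 ≤ 1/2 := by
    have h1 : C * T ≤ C * (1/(2*C)) := mul_le_mul_of_nonneg_left hT_ub hC0.le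
    have h2 : C * (1/(2*C)) = 1/2 := by field_simp
    linarith
  have hPK : (3*S - 1)/m ≤ P * K := by
    have h1 := mul_le_mul_of_nonneg_right hP_lb hK.le
    have h2 : (3*S - 1)/(m*K) * K = (3*S-1)/m := by field_simp
    linarith
  have hb_lb : P/2 + (3*S-1)/(2*m) ≤ P * s^4 := by
    have hid : P * s^4 = P/2 + P*K/2 := by
      rw [hK_def]; ring
    have h3 : (3*S-1)/(2*m) = ((3*S-1)/m)/2 := by ring
    linarith
  -- t bounds
  have harg0 : (0:ℝ) ≤ (m * P + S + 1) / 2 := by positivity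
  have ht_ub : (t:ℝ) ≤ (m * P + S + 1) / 2 + 1 := le_of_lt (ht_ub' harg0)
  have ha_pos : (0:ℝ) < (t:ℝ) - 1 := by
    linarith [ht_lb, mul_nonneg hm0.le hP0, hS4]
  have ha0 : 0 < ((t:ℝ) - 1)/m := div_pos ha_pos hm0
  have ha_ub : ((t:ℝ) - 1)/m ≤ P/2 + (S+1)/(2*m) := by
    have h1 : ((t:ℝ) - 1)/m ≤ ((m * P + S + 1) / 2)/m :=
      div_le_div_of_nonneg_right (show (t:ℝ)-1 ≤ (m * P + S + 1) / 2 by linarith) hm0.le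
    have h2 : ((m * P + S + 1) / 2)/m = P/2 + (S+1)/(2*m) := by field_simp; ring
    linarith
  -- gap
  have hgap : T/2 ≤ P * s^4 - ((t:ℝ) - 1)/m := by
    have i1 : (3*S-1)/(2*m) - (S+1)/(2*m) = (S-1)/m := by field_simp; ring
    have i2 : S/(2*m) = T/2 := by rw [hS_eq]; field_simp
    have i3 : S/(2*m) ≤ (S-1)/m := by
      have : S/(2*m) = (S/2)/m := by ring
      rw [this]
      exact div_le_div_of_nonneg_right (by linarith) hm0.le
    linarith [hb_lb, ha_ub, i1, i2, i3]
  have hbpos : 0 < P * s^4 := lt_of_lt_of_le ha0 (by linarith)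
  have hab : ((t:ℝ) - 1)/m < P * s^4 := by linarith [hT0]
  have hb1 : P * s^4 < 1 := by linarith
  have hkl : (P * s^4 - ((t:ℝ) - 1)/m)^2 / (2*(P * s^4)) ≤
      klBer (((t:ℝ) - 1)/m) (P * s^4) := klBer_lb ha0 hab hb1
  have hstep : T/(8*C) ≤ (P * s^4 - ((t:ℝ) - 1)/m)^2 / (2*(P * s^4)) := by
    rw [div_le_div_iff₀ (by positivity) (by positivity)]
    have e1 : (T/2)^2 ≤ (P * s^4 - ((t:ℝ) - 1)/m)^2 := by
      apply pow_le_pow_left₀ (by positivity) hgap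
    have e2 : P * s^4 ≤ C * T := hb_ub
    have h1 := mul_le_mul_of_nonneg_left e2 (show (0:ℝ) ≤ 2*T by positivity)
    have h2 := mul_le_mul_of_nonneg_right e1 (show (0:ℝ) ≤ 8*C by positivity)
    linarith [h1, h2]
  have hklT : T/(8*C) ≤ klBer (((t:ℝ) - 1)/m) (P * s^4) := le_trans hstep hkl
  -- relate sqrt(x log x) to S
  have hsx4 : (4:ℝ) ≤ Real.sqrt x := by
    calc (4:ℝ) = Real.sqrt 16 := by
          rw [show (16:ℝ) = 4^2 by norm_num, Real.sqrt_sq (by norm_num)]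
    _ ≤ Real.sqrt x := Real.sqrt_le_sqrt (by linarith)
  have hsqx_le_m : Real.sqrt x ≤ m := by
    have h1 := mul_le_mul_of_nonneg_right hsx4 (Real.sqrt_nonneg x)
    rw [hm_def]; linarith [hsqx, hsx4, h1]
  have hlog_half : Real.log x / 2 ≤ Real.log m := by
    have h1 : Real.log (Real.sqrt x) = Real.log x / 2 := Real.log_sqrt (by linarith)
    have h2 : Real.log (Real.sqrt x) ≤ Real.log m :=
      Real.log_le_log (by positivity) hsqx_le_m
    linarith
  have hm_half : x/2 ≤ m := by rw [hm_def]; linarith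
  have hfin1 : Real.sqrt (x * Real.log x) ≤ 2 * S := by
    have h1 : (x/2) * (Real.log x / 2) ≤ m * Real.log m :=
      mul_le_mul hm_half hlog_half (by linarith) hm0.le
    calc Real.sqrt (x * Real.log x) ≤ Real.sqrt (4 * (m * Real.log m)) := by
          apply Real.sqrt_le_sqrt; linarith
    _ = 2 * S := by
        rw [hS_def, Real.sqrt_mul (by norm_num : (0:ℝ) ≤ 4),
          show Real.sqrt 4 = 2 by
            rw [show (4:ℝ) = 2^2 by norm_num, Real.sqrt_sq (by norm_num)]]
  -- final assembly
  apply mul_le_mul_of_nonneg_left ?_ (show (0:ℝ) ≤ x by linarith)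
  rw [Real.exp_le_exp, neg_le_neg_iff]
  have h5 : m * (T/(8*C)) ≤ m * klBer (((t:ℝ) - 1)/m) (P * s^4) :=
    mul_le_mul_of_nonneg_left hklT hm0.le
  have h6 : m * (T/(8*C)) = S/(8*C) := by rw [hS_eq]; ring
  have h7 : 1/(16*C) * Real.sqrt (x * Real.log x) ≤ 1/(16*C) * (2*S) :=
    mul_le_mul_of_nonneg_left hfin1 (by positivity)
  have h8 : 1/(16*C) * (2*S) = S/(8*C) := by field_simp; ring
  linarith [h5, h6, h7, h8]
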